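/- arXiv:1802.00979 — 3 statements merged into one kernel-verified Lean document; each statement's English description precedes it below -/
import Mathlib

section
/- The class of all finite linearly ordered posets has the ordering property: for every finite poset (A, ⊑) there is a finite poset (B, ⊑_B) such that for every linear extension < of ⊑ and every linear extension ⊏ of ⊑_B, the linearly ordered poset (A, ⊑, <) embeds into (B, ⊑_B, ⊏). -/
/-- A finite linearly ordered poset `(A, ⊑, <)`: a finite partial order `le` (⊑)
together with a strict linear order `lt` (<) extending it. -/
structure LOP : Type 1 where
  carrier : Type
  finite : Finite carrier
  le : carrier → carrier → Prop
  lt : carrier → carrier → Prop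
  po : IsPartialOrder carrier le
  sto : IsStrictTotalOrder carrier lt
  extend : ∀ a b, le a b → a ≠ b → lt a b

/-- Embeddings of linearly ordered posets: injective maps preserving and reflecting ⊑ and <. -/
def LOP.IsEmb (A B : LOP) (f : A.carrier → B.carrier) : Prop :=
  Function.Injective f ∧ (∀ a b, A.le a b ↔ B.le (f a) (f b)) ∧
    (∀ a b, A.lt a b ↔ B.lt (f a) (f b))

def LOP.Embeds (A B : LOP) : Prop := ∃ f, A.IsEmb B f

/-- `A` and `B` are isomorphic linearly ordered posets. -/
def LOP.Iso (A B : LOP) : Prop := ∃ f, A.IsEmb B f ∧ Function.Surjective f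

/-- `S` is (the underlying set of) a substructure of `C` isomorphic to `A`. -/
def LOP.IsCopy (A C : LOP) (S : Set C.carrier) : Prop :=
  ∃ f, A.IsEmb C f ∧ Set.range f = S

/-- `C ⟶ (B)^A_k`. -/
def LOP.Arrows (C B A : LOP) (k : ℕ) : Prop :=
  ∀ χ : Set C.carrier → Fin k,
    ∃ Bt : Set C.carrier, B.IsCopy C Bt ∧ ∃ j : Fin k,
      ∀ S : Set C.carrier, A.IsCopy C S → S ⊆ Bt → χ S = j

/-- The Ramsey property for a class of finite linearly ordered posets. -/
def RamseyProp (K : LOP → Prop) : Prop :=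
  ∀ A B, K A → K B → A.Embeds B → ∀ k : ℕ, 2 ≤ k →
    ∃ C, K C ∧ C.Arrows B A k

/-- The complemented lexicographic order: `A <c̄lex B` iff `A ⊋ B`, or
`min(A∖B) < min(B∖A)` when `A` and `B` are ⊆-incomparable. -/
def clexLt (n : ℕ) (A B : Finset (Fin n)) : Prop :=
  B ⊂ A ∨ (¬ A ⊆ B ∧ ¬ B ⊆ A ∧ (A \ B).min < (B \ A).min)

theorem clexLt_iff (n : ℕ) (A B : Finset (Fin n)) :
    clexLt n A B ↔ ∃ p : Fin n, p ∈ A ∧ p ∉ B ∧ ∀ x, x < p → (x ∈ A ↔ x ∈ B) := by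
  constructor
  · rintro (h | ⟨h1, h2, h3⟩)
    · have hne : (A \ B).Nonempty := Finset.sdiff_nonempty.2 (fun hs => h.not_subset hs)
      refine ⟨(A \ B).min' hne, ?_, ?_, ?_⟩
      · exact (Finset.mem_sdiff.1 ((A \ B).min'_mem hne)).1
      · exact (Finset.mem_sdiff.1 ((A \ B).min'_mem hne)).2
      · intro x hx
        constructor
        · intro hxA
          by_contra hxB
          exact absurd (Finset.min'_le _ x (Finset.mem_sdiff.2 ⟨hxA, hxB⟩)) (not_le.2 hx)
        · intro hxB
          exact h.subset hxB
    · have hne : (A \ B).Nonempty := Finset.sdiff_nonempty.2 h1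
      refine ⟨(A \ B).min' hne, ?_, ?_, ?_⟩
      · exact (Finset.mem_sdiff.1 ((A \ B).min'_mem hne)).1
      · exact (Finset.mem_sdiff.1 ((A \ B).min'_mem hne)).2
      · intro x hx
        constructor
        · intro hxA
          by_contra hxB
          exact absurd (Finset.min'_le _ x (Finset.mem_sdiff.2 ⟨hxA, hxB⟩)) (not_le.2 hx)
        · intro hxB
          by_contra hxA
          have hmem : x ∈ B \ A := Finset.mem_sdiff.2 ⟨hxB, hxA⟩
          have h4 : (B \ A).min ≤ (x : WithTop (Fin n)) := Finset.min_le hmem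
          have h5 : ((A \ B).min' hne : WithTop (Fin n)) = (A \ B).min := Finset.coe_min' hne
          have h6 : (x : WithTop (Fin n)) < ((A \ B).min' hne : WithTop (Fin n)) :=
            WithTop.coe_lt_coe.2 hx
          rw [h5] at h6
          exact absurd (h4.trans_lt (h6.trans h3)) (lt_irrefl _)
  · rintro ⟨p, hpA, hpB, hagree⟩
    by_cases hBA : B ⊆ A
    · exact Or.inl (Finset.ssubset_iff_of_subset hBA |>.2 ⟨p, hpA, hpB⟩)
    · refine Or.inr ⟨fun hAB => hpB (hAB hpA), hBA, ?_⟩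
      have h1 : (A \ B).min ≤ (p : WithTop (Fin n)) :=
        Finset.min_le (Finset.mem_sdiff.2 ⟨hpA, hpB⟩)
      have hne2 : (B \ A).Nonempty := Finset.sdiff_nonempty.2 hBA
      have hb := Finset.mem_sdiff.1 ((B \ A).min'_mem hne2)
      have hpb : p < (B \ A).min' hne2 := by
        rcases lt_trichotomy ((B \ A).min' hne2) p with h | h | h
        · exact absurd ((hagree _ h).2 hb.1) hb.2
        · exact absurd (h ▸ hpB) (fun hh => hh hb.1)
        · exact h
      have h2 : (p : WithTop (Fin n)) < (B \ A).min := by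
        rw [← Finset.coe_min' hne2]
        exact_mod_cast hpb
      exact h1.trans_lt h2

theorem clexLt_sto (n : ℕ) : IsStrictTotalOrder (Finset (Fin n)) (clexLt n) :=
  { trichotomous := fun A B => by
      suffices H : clexLt n A B ∨ A = B ∨ clexLt n B A by
        intro h1 h2
        rcases H with h | h | h
        exacts [absurd h h1, h, absurd h h2]
      by_cases hAB : A = B
      · exact Or.inr (Or.inl hAB)
      · have hne : ((A \ B) ∪ (B \ A)).Nonempty := by
          rw [Finset.nonempty_iff_ne_empty]
          intro h
          rcases Finset.union_eq_empty.1 h with ⟨h1, h2⟩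
          exact hAB (Finset.Subset.antisymm (Finset.sdiff_eq_empty_iff_subset.1 h1)
            (Finset.sdiff_eq_empty_iff_subset.1 h2))
        set u := ((A \ B) ∪ (B \ A)).min' hne with hu_def
        have hu : u ∈ (A \ B) ∪ (B \ A) := Finset.min'_mem _ hne
        have hagree : ∀ x, x < u → (x ∈ A ↔ x ∈ B) := by
          intro x hx
          constructor
          · intro hxA
            by_contra hxB
            exact absurd (Finset.min'_le _ x (Finset.mem_union_left _
              (Finset.mem_sdiff.2 ⟨hxA, hxB⟩))) (not_le.2 hx)
          · intro hxB
            by_contra hxA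
            exact absurd (Finset.min'_le _ x (Finset.mem_union_right _
              (Finset.mem_sdiff.2 ⟨hxB, hxA⟩))) (not_le.2 hx)
        rcases Finset.mem_union.1 hu with h | h
        · rcases Finset.mem_sdiff.1 h with ⟨h1, h2⟩
          exact Or.inl ((clexLt_iff n A B).2 ⟨u, h1, h2, hagree⟩)
        · rcases Finset.mem_sdiff.1 h with ⟨h1, h2⟩
          exact Or.inr (Or.inr ((clexLt_iff n B A).2
            ⟨u, h1, h2, fun x hx => (hagree x hx).symm⟩))
    irrefl := fun A h => by
      rcases (clexLt_iff n A A).1 h with ⟨p, h1, h2, _⟩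
      exact h2 h1
    trans := fun A B C hAB hBC => by
      rcases (clexLt_iff n A B).1 hAB with ⟨p, hpA, hpB, hp⟩
      rcases (clexLt_iff n B C).1 hBC with ⟨q, hqB, hqC, hq⟩
      rcases lt_trichotomy p q with h | h | h
      · exact (clexLt_iff n A C).2 ⟨p, hpA, fun hpC => hpB ((hq p h).2 hpC),
          fun x hx => (hp x hx).trans (hq x (hx.trans h))⟩
      · exact absurd (h ▸ hqB) hpB
      · exact (clexLt_iff n A C).2 ⟨q, (hp q h).2 hqB, hqC,
          fun x hx => (hp x (hx.trans h)).trans (hq x hx)⟩ }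

/-- The linearly ordered poset `Π_n = (𝒫({1,…,n}), ⊇, <c̄lex)`. -/
def PiN (n : ℕ) : LOP where
  carrier := Finset (Fin n)
  finite := inferInstance
  le := fun A B => B ⊆ A
  lt := clexLt n
  po :=
    { refl := fun A => Finset.Subset.refl A
      trans := fun _ _ _ hAB hBC => hBC.trans hAB
      antisymm := fun _ _ h1 h2 => Finset.Subset.antisymm h2 h1 }
  sto := clexLt_sto n
  extend := fun _ _ hle hne => Or.inl (hle.ssubset_of_ne (fun h => hne h.symm))

/-- Replace the linear order of a linearly ordered poset by another linear
extension of the same partial order. -/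
def LOP.reorder (A : LOP) (l : A.carrier → A.carrier → Prop)
    (h1 : IsStrictTotalOrder A.carrier l)
    (h2 : ∀ a b, A.le a b → a ≠ b → l a b) : LOP :=
  ⟨A.carrier, A.finite, A.le, l, A.po, h1, h2⟩

/-- The ordering property for a class of finite linearly ordered posets: for every
poset underlying a member there is a poset underlying a member such that any
linear extension of the former (lying in the class) embeds into any linear
extension of the latter (lying in the class). -/
def OrderingProp (K : LOP → Prop) : Prop :=
  ∀ A, K A → ∃ B, K B ∧
    ∀ lA h1A h2A lB h1B h2B,
      K (A.reorder lA h1A h2A) → K (B.reorder lB h1B h2B) →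
        (A.reorder lA h1A h2A).Embeds (B.reorder lB h1B h2B)

/-- A finite partially ordered set. -/
structure FPoset : Type 1 where
  carrier : Type
  finite : Finite carrier
  le : carrier → carrier → Prop
  po : IsPartialOrder carrier le

/-- The linearly ordered poset obtained from a finite poset and a linear extension
of its partial order. -/
def FPoset.toLOP (P : FPoset) (l : P.carrier → P.carrier → Prop)
    (h1 : IsStrictTotalOrder P.carrier l)
    (h2 : ∀ a b, P.le a b → a ≠ b → l a b) : LOP :=
  ⟨P.carrier, P.finite, P.le, l, P.po, h1, h2⟩

lemma sto_tri {α : Type*} {r : α → α → Prop} (h : IsStrictTotalOrder α r) (a b : α) :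
    r a b ∨ a = b ∨ r b a := by
  by_cases h1 : r a b
  · exact Or.inl h1
  by_cases h2 : r b a
  · exact Or.inr (Or.inr h2)
  exact Or.inr (Or.inl (h.trichotomous a b h1 h2))

-- helper 1 : comap of a strict total order
lemma sto_comap {α β : Type*} {r : β → β → Prop} (h : IsStrictTotalOrder β r) {φ : α → β}
    (hφ : Function.Injective φ) : IsStrictTotalOrder α (fun a b => r (φ a) (φ b)) := by
  refine { trichotomous := ?_, irrefl := ?_, trans := ?_ }
  · intro a b
    intro h1 h2
    exact hφ (h.trichotomous _ _ h1 h2)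
  · intro a; exact h.irrefl (φ a)
  · intro a b c hab hbc; exact h.trans _ _ _ hab hbc

-- helper 2 : existence of a maximum of a finite strict total order
lemma exists_sto_max {α : Type*} [Finite α] [Nonempty α] (r : α → α → Prop)
    (h : IsStrictTotalOrder α r) : ∃ m, ∀ b, b ≠ m → r b m := by
  classical
  haveI := Fintype.ofFinite α
  haveI := h
  have key : ∀ s : Finset α, s.Nonempty → ∃ m ∈ s, ∀ b ∈ s, b ≠ m → r b m := by
    intro s
    induction s using Finset.induction_on with
    | empty => rintro ⟨x, hx⟩; simp at hx
    | @insert a s ha IH =>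
      intro _
      rcases s.eq_empty_or_nonempty with rfl | hs
      · exact ⟨a, by simp, by intro b hb hne; simp at hb; exact absurd hb hne⟩
      · obtain ⟨m, hm, hmax⟩ := IH hs
        rcases sto_tri h a m with h' | h' | h'
        · refine ⟨m, by simp [hm], ?_⟩
          intro b hb hne
          rcases Finset.mem_insert.1 hb with rfl | hb'
          · exact h'
          · exact hmax b hb' hne
        · subst h'; exact absurd hm ha
        · refine ⟨a, by simp, ?_⟩
          intro b hb hne
          rcases Finset.mem_insert.1 hb with rfl | hb'
          · exact absurd rfl hne
          · rcases eq_or_ne b m with rfl | hbm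
            · exact h'
            · exact h.trans _ _ _ (hmax b hb' hbm) h'
  obtain ⟨m, _, hm⟩ := key Finset.univ ⟨Classical.arbitrary α, Finset.mem_univ _⟩
  exact ⟨m, fun b hb => hm b (Finset.mem_univ _) hb⟩

-- asymmetry helper
lemma sto_asymm {α : Type*} {r : α → α → Prop} (h : IsStrictTotalOrder α r) {a b : α}
    (h1 : r a b) (h2 : r b a) : False := by
  exact h.irrefl a (h.trans _ _ _ h1 h2)

noncomputable def incs (A : LOP) : ℕ :=
  Nat.card {p : A.carrier × A.carrier // ¬ A.le p.1 p.2 ∧ ¬ A.le p.2 p.1}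

def LOP.erase (A : LOP) (a : A.carrier) : LOP where
  carrier := {b : A.carrier // b ≠ a}
  finite := letI := A.finite; inferInstance
  le x y := A.le x.1 y.1
  lt x y := A.lt x.1 y.1
  po :=
    { refl := fun x => A.po.refl x.1
      trans := fun x y z h1 h2 => A.po.trans x.1 y.1 z.1 h1 h2
      antisymm := fun x y h1 h2 => Subtype.ext (A.po.antisymm x.1 y.1 h1 h2) }
  sto :=
    { trichotomous := fun x y => by
        intro h1 h2
        exact Subtype.ext (A.sto.trichotomous x.1 y.1 h1 h2)
      irrefl := fun x => A.sto.irrefl x.1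
      trans := fun x y z h1 h2 => A.sto.trans x.1 y.1 z.1 h1 h2 }
  extend := fun x y h hne => A.extend x.1 y.1 h (fun e => hne (Subtype.ext e))

def optle (A : LOP) (x y : Option A.carrier) : Prop :=
  match x, y with
  | _, none => True
  | some a, some b => A.le a b
  | none, some _ => False

def optlt (A : LOP) (x y : Option A.carrier) : Prop :=
  match x, y with
  | none, _ => False
  | some a, some b => A.lt a b
  | some _, none => True

def LOP.addTop (A : LOP) : LOP where
  carrier := Option A.carrier
  finite := letI := A.finite; letI := Fintype.ofFinite A.carrier; Finite.of_fintype _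
  le := optle A
  lt := optlt A
  po :=
    { refl := fun x => by
        rcases x with _ | a
        · trivial
        · exact A.po.refl a
      trans := fun x y z h1 h2 => by
        rcases z with _ | c
        · rcases x with _ | a <;> trivial
        · rcases y with _ | b
          · exact h2.elim
          · rcases x with _ | a
            · exact h1.elim
            · exact A.po.trans a b c h1 h2
      antisymm := fun x y h1 h2 => by
        rcases x with _ | a <;> rcases y with _ | b
        · rfl
        · exact h1.elim
        · exact h2.elim
        · exact congrArg some (A.po.antisymm a b h1 h2) }
  sto :=
    { trichotomous := fun x y => by
        rcases x with _ | a <;> rcases y with _ | b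
        · exact fun _ _ => rfl
        · exact fun _ h => (h trivial).elim
        · exact fun h _ => (h trivial).elim
        · exact fun h h' => congrArg some (A.sto.trichotomous a b h h')
      irrefl := fun x => by
        rcases x with _ | a
        · exact fun h => h
        · exact A.sto.irrefl a
      trans := fun x y z h1 h2 => by
        rcases x with _ | a
        · rcases y with _ | b <;> exact h1.elim
        · rcases z with _ | c
          · trivial
          · rcases y with _ | b
            · exact h2.elim
            · exact A.sto.trans a b c h1 h2 }
  extend := fun x y h hne => by
    rcases x with _ | a <;> rcases y with _ | b
    · exact (hne rfl).elim
    · exact h.elim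
    · trivial
    · exact A.extend a b h (fun e => hne (congrArg some e))

def foptle (P : FPoset) (x y : Option P.carrier) : Prop :=
  match x, y with
  | _, none => True
  | some a, some b => P.le a b
  | none, some _ => False

def FPoset.addTop (P : FPoset) : FPoset where
  carrier := Option P.carrier
  finite := letI := P.finite; letI := Fintype.ofFinite P.carrier; Finite.of_fintype _
  le := foptle P
  po :=
    { refl := fun x => by
        rcases x with _ | a
        · trivial
        · exact P.po.refl a
      trans := fun x y z h1 h2 => by
        rcases z with _ | c
        · rcases x with _ | a <;> trivial
        · rcases y with _ | b
          · exact h2.elim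
          · rcases x with _ | a
            · exact h1.elim
            · exact P.po.trans a b c h1 h2
      antisymm := fun x y h1 h2 => by
        rcases x with _ | a <;> rcases y with _ | b
        · rfl
        · exact h1.elim
        · exact h2.elim
        · exact congrArg some (P.po.antisymm a b h1 h2) }

def sumle (P Q : FPoset) (x y : P.carrier ⊕ Q.carrier) : Prop :=
  match x, y with
  | .inl a, .inl b => P.le a b
  | .inr a, .inr b => Q.le a b
  | _, _ => False

def FPoset.dsum (P Q : FPoset) : FPoset where
  carrier := P.carrier ⊕ Q.carrier
  finite := letI := P.finite; letI := Q.finite; inferInstance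
  le := sumle P Q
  po :=
    { refl := fun x => by
        rcases x with a | a
        · exact P.po.refl a
        · exact Q.po.refl a
      trans := fun x y z h1 h2 => by
        rcases x with a | a <;> rcases y with b | b <;> rcases z with c | c <;>
          first
            | exact h1.elim
            | exact h2.elim
            | exact P.po.trans _ _ _ h1 h2
            | exact Q.po.trans _ _ _ h1 h2
      antisymm := fun x y h1 h2 => by
        rcases x with a | a <;> rcases y with b | b
        · exact congrArg Sum.inl (P.po.antisymm a b h1 h2)
        · exact h1.elim
        · exact h1.elim
        · exact congrArg Sum.inr (Q.po.antisymm a b h1 h2) }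

lemma card_option_eq (α : Type) [Finite α] : Nat.card (Option α) = Nat.card α + 1 := by
  rw [Nat.card_congr ((Equiv.optionEquivSumPUnit α) : Option α ≃ α ⊕ PUnit.{1}), Nat.card_sum]
  simp

lemma card_erase (A : LOP) (m : A.carrier) :
    Nat.card A.carrier = Nat.card {b : A.carrier // b ≠ m} + 1 := by
  classical
  letI := A.finite
  rw [← Nat.card_congr (Equiv.optionSubtypeNe m), card_option_eq]

lemma incs_erase_le (A : LOP) (m : A.carrier) : incs (A.erase m) ≤ incs A := by
  letI := A.finite
  refine Nat.card_le_card_of_injective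
    (fun z => ⟨(z.1.1.1, z.1.2.1), z.2⟩) ?_
  rintro ⟨⟨p, q⟩, hz⟩ ⟨⟨p', q'⟩, hw⟩ h
  simp only [Subtype.mk.injEq, Prod.mk.injEq] at h
  apply Subtype.ext
  simp only [Prod.mk.injEq]
  exact ⟨Subtype.ext (Prod.mk.inj (congrArg Subtype.val h)).1,
    Subtype.ext (Prod.mk.inj (congrArg Subtype.val h)).2⟩

lemma incs_lt (A : LOP) (m b₀ : A.carrier) (hb1 : ¬ A.le b₀ m) (hb2 : ¬ A.le m b₀) :
    incs ((A.erase m).addTop) < incs A := by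
  letI := A.finite
  set B := (A.erase m).addTop with hB
  set S := {p : B.carrier × B.carrier // ¬ B.le p.1 p.2 ∧ ¬ B.le p.2 p.1} with hS
  have hcard : Nat.card (S ⊕ Unit) ≤ incs A := by
    refine Nat.card_le_card_of_injective ?_ ?_
    · intro z
      match z with
      | Sum.inl ⟨(none, none), h⟩ => exact absurd trivial h.1
      | Sum.inl ⟨(none, some q), h⟩ => exact absurd trivial h.2
      | Sum.inl ⟨(some p, none), h⟩ => exact absurd trivial h.1
      | Sum.inl ⟨(some p, some q), h⟩ => exact ⟨(p.1, q.1), h⟩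
      | Sum.inr _ => exact ⟨(b₀, m), ⟨hb1, hb2⟩⟩
    · rintro (⟨⟨x, y⟩, h⟩ | u) (⟨⟨x', y'⟩, h'⟩ | u') e
      · rcases x with _ | p <;> rcases y with _ | q
        · exact absurd trivial h.1
        · exact absurd trivial h.2
        · exact absurd trivial h.1
        · rcases x' with _ | p' <;> rcases y' with _ | q'
          · exact absurd trivial h'.1
          · exact absurd trivial h'.2
          · exact absurd trivial h'.1
          · simp only [Subtype.mk.injEq, Prod.mk.injEq] at e
            have e' := Prod.mk.inj (congrArg Subtype.val e)
            obtain rfl : p = p' := Subtype.ext e'.1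
            obtain rfl : q = q' := Subtype.ext e'.2
            rfl
      · rcases x with _ | p <;> rcases y with _ | q
        · exact absurd trivial h.1
        · exact absurd trivial h.2
        · exact absurd trivial h.1
        · simp only [Subtype.mk.injEq, Prod.mk.injEq] at e
          exact absurd (Prod.mk.inj (congrArg Subtype.val e)).2 q.2
      · rcases x' with _ | p' <;> rcases y' with _ | q'
        · exact absurd trivial h'.1
        · exact absurd trivial h'.2
        · exact absurd trivial h'.1
        · simp only [Subtype.mk.injEq, Prod.mk.injEq] at e
          exact absurd (Prod.mk.inj (congrArg Subtype.val e)).2.symm q'.2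
      · rcases u with ⟨⟩; rcases u' with ⟨⟩; rfl
  have : Nat.card (S ⊕ Unit) = incs B + 1 := by
    letI := B.finite
    have : Finite S := by
      rw [hS]
      infer_instance
    rw [Nat.card_sum]
    simp [incs, hS, hB]
  omega

def forcele (W : FPoset) (x y : (Bool × W.carrier) ⊕ (Bool × Set W.carrier × W.carrier)) : Prop :=
  match x, y with
  | .inl (s, q), .inl (s', q') => s = s' ∧ W.le q q'
  | .inl (s, q), .inr (s', V, w) => (s = s' ∧ ∃ v ∈ V, W.le q v) ∨ (s ≠ s' ∧ W.le q w)
  | .inr i, .inr j => i = j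
  | .inr _, .inl _ => False

def FPoset.force (W : FPoset) : FPoset where
  carrier := (Bool × W.carrier) ⊕ (Bool × Set W.carrier × W.carrier)
  finite := letI := W.finite; inferInstance
  le := forcele W
  po :=
    { refl := fun x => by
        rcases x with ⟨s, q⟩ | i
        · exact ⟨rfl, W.po.refl q⟩
        · rfl
      trans := fun x y z h1 h2 => by
        rcases x with ⟨s, q⟩ | i
        · rcases y with ⟨s', q'⟩ | j
          · rcases z with ⟨s'', q''⟩ | k
            · exact ⟨h1.1.trans h2.1, W.po.trans _ _ _ h1.2 h2.2⟩
            · rcases h2 with ⟨he, v, hv, hle⟩ | ⟨hne, hle⟩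
              · exact Or.inl ⟨h1.1.trans he, v, hv, W.po.trans _ _ _ h1.2 hle⟩
              · exact Or.inr ⟨fun e => hne (h1.1 ▸ e), W.po.trans _ _ _ h1.2 hle⟩
          · rcases z with ⟨s'', q''⟩ | k
            · exact h2.elim
            · rw [← h2]; exact h1
        · rcases y with ⟨s', q'⟩ | j
          · exact h1.elim
          · rcases z with ⟨s'', q''⟩ | k
            · exact h2.elim
            · exact h1.trans h2
      antisymm := fun x y h1 h2 => by
        rcases x with ⟨s, q⟩ | i
        · rcases y with ⟨s', q'⟩ | j
          · rcases h1 with ⟨he, hle⟩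
            rcases h2 with ⟨-, hle'⟩
            rw [he, W.po.antisymm _ _ hle hle']
          · exact h2.elim
        · rcases y with ⟨s', q'⟩ | j
          · exact h1.elim
          · rw [h1] }

lemma key_empty (A : LOP) (h : IsEmpty A.carrier) :
    ∃ Q : FPoset, ∀ lQ h1 h2, A.Embeds (Q.toLOP lQ h1 h2) := by
  refine ⟨⟨PEmpty, inferInstance, fun _ _ => True,
    { refl := fun _ => trivial, trans := fun _ _ _ _ _ => trivial,
      antisymm := fun a _ _ _ => a.elim }⟩, ?_⟩
  intro lQ h1 h2
  exact ⟨fun a => (h.false a).elim, fun a b _ => (h.false a).elim,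
    fun a => (h.false a).elim, fun a => (h.false a).elim⟩

lemma key : ∀ (N : ℕ) (A : LOP), Nat.card A.carrier + incs A ≤ N →
    ∃ Q : FPoset, ∀ lQ h1 h2, A.Embeds (Q.toLOP lQ h1 h2) := by
  intro N
  induction N with
  | zero =>
    intro A hA
    apply key_empty
    letI := A.finite
    have h0 : Nat.card A.carrier = 0 := by omega
    rcases Nat.card_eq_zero.1 h0 with h | h
    · exact h
    · haveI := h; exact (not_finite A.carrier).elim
  | succ N IH =>
    intro A hA
    by_cases hemp : IsEmpty A.carrier
    · exact key_empty A hemp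
    haveI := A.finite
    haveI : Nonempty A.carrier := not_isEmpty_iff.mp hemp
    obtain ⟨m, hm⟩ := exists_sto_max A.lt A.sto
    have hmle : ∀ b : A.carrier, b ≠ m → ¬ A.le m b := by
      intro b hb hle
      exact sto_asymm A.sto (A.extend m b hle (Ne.symm hb)) (hm b hb)
    classical
    by_cases htop : ∀ b, A.le b m
    · -- m is a top element : Q := Q' with a new top
      obtain ⟨Q', hQ'⟩ := IH (A.erase m) (by
        have h1 := card_erase A m
        have h2 := incs_erase_le A m
        have h3 : Nat.card (A.erase m).carrier = Nat.card {b : A.carrier // b ≠ m} := rfl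
        omega)
      refine ⟨Q'.addTop, ?_⟩
      intro lQ h1 h2
      have hinj : Function.Injective (fun q : Q'.carrier => (some q : Option Q'.carrier)) :=
        fun a b e => Option.some.inj e
      have h1' : IsStrictTotalOrder _ (fun q q' : Q'.carrier => lQ (some q) (some q')) :=
        sto_comap h1 hinj
      have h2' : ∀ a b : Q'.carrier, Q'.le a b → a ≠ b → lQ (some a) (some b) := by
        intro a b hle hne
        exact h2 (some a) (some b) hle (fun e => hne (Option.some.inj e))
      obtain ⟨f, finj, fle, flt⟩ := hQ' _ h1' h2'
      have lQsn : ∀ q : Q'.carrier, lQ (some q) none := by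
        intro q
        exact h2 (some q) none trivial (fun e => Option.some_ne_none q e)
      refine ⟨fun b => (if h : b = m then none else some (f ⟨b, h⟩) : Option Q'.carrier), ?_, ?_, ?_⟩
      · intro a b e
        dsimp only at e
        by_cases ha : a = m <;> by_cases hb : b = m
        · exact ha.trans hb.symm
        · rw [dif_pos ha, dif_neg hb] at e; exact (Option.some_ne_none _ e.symm).elim
        · rw [dif_neg ha, dif_pos hb] at e; exact (Option.some_ne_none _ e).elim
        · rw [dif_neg ha, dif_neg hb] at e
          have := finj (Option.some.inj e)
          exact congrArg Subtype.val this
      · intro a b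
        dsimp only
        by_cases ha : a = m <;> by_cases hb : b = m
        · rw [dif_pos ha, dif_pos hb, ha, hb]
          exact iff_of_true (A.po.refl m) trivial
        · rw [dif_pos ha, dif_neg hb, ha]
          exact iff_of_false (hmle b hb) (fun h => h)
        · rw [dif_neg ha, dif_pos hb, hb]
          exact iff_of_true (htop a) trivial
        · rw [dif_neg ha, dif_neg hb]
          exact fle ⟨a, ha⟩ ⟨b, hb⟩
      · intro a b
        dsimp only
        by_cases ha : a = m <;> by_cases hb : b = m
        · rw [dif_pos ha, dif_pos hb, ha, hb]
          exact iff_of_false (A.sto.irrefl m) (h1.irrefl none)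
        · rw [dif_pos ha, dif_neg hb, ha]
          refine iff_of_false (fun h => sto_asymm A.sto h (hm b hb)) ?_
          exact fun h => sto_asymm h1 h (lQsn (f ⟨b, hb⟩))
        · rw [dif_neg ha, dif_pos hb, hb]
          exact iff_of_true (hm a ha) (lQsn (f ⟨a, ha⟩))
        · rw [dif_neg ha, dif_neg hb]
          exact flt ⟨a, ha⟩ ⟨b, hb⟩
    · -- m is not a top element
      push_neg at htop
      obtain ⟨b₀, hb₀⟩ := htop
      have hb₀m : b₀ ≠ m := fun e => hb₀ (by rw [e]; exact A.po.refl m)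
      have hmb₀ : ¬ A.le m b₀ := hmle b₀ hb₀m
      obtain ⟨W, hW⟩ := IH ((A.erase m).addTop) (by
        have h1 := card_erase A m
        have h2 := incs_lt A m b₀ hb₀ hmb₀
        have h3 : Nat.card ((A.erase m).addTop).carrier
            = Nat.card {b : A.carrier // b ≠ m} + 1 := by
          letI : Finite (A.erase m).carrier := (A.erase m).finite
          exact card_option_eq (A.erase m).carrier
        omega)
      refine ⟨W.force, ?_⟩
      intro lQ h1 h2
      haveI hWf := W.finite
      have hinj : ∀ s : Bool, Function.Injective
          (fun q : W.carrier => (Sum.inl (s, q) : (W.force).carrier)) := by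
        intro s a b e
        exact congrArg Prod.snd (Sum.inl.inj e)
      have h1s : ∀ s, IsStrictTotalOrder _
          (fun q q' : W.carrier => lQ (Sum.inl (s, q)) (Sum.inl (s, q'))) :=
        fun s => sto_comap h1 (hinj s)
      have h2s : ∀ s : Bool, ∀ a b : W.carrier, W.le a b → a ≠ b →
          lQ (Sum.inl (s, a)) (Sum.inl (s, b)) := by
        intro s a b hle hne
        refine h2 _ _ ⟨rfl, hle⟩ ?_
        intro e
        exact hne (congrArg Prod.snd (Sum.inl.inj e))
      have G : ∀ s : Bool, ∃ g, ((A.erase m).addTop).IsEmb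
          (W.toLOP _ (h1s s) (h2s s)) g := fun s => hW _ (h1s s) (h2s s)
      choose g hg using G
      have hpick : ∃ s : Bool,
          lQ (Sum.inl (s, g s none)) (Sum.inl (!s, g (!s) none)) := by
        rcases sto_tri h1 (Sum.inl (true, g true none) : (W.force).carrier)
          (Sum.inl (false, g false none)) with h | h | h
        · exact ⟨true, h⟩
        · exact Bool.noConfusion (congrArg Prod.fst (Sum.inl.inj h))
        · exact ⟨false, h⟩
      obtain ⟨s, hs⟩ := hpick
      obtain ⟨ginj, gle, glt⟩ := hg s
      set V : Set W.carrier :=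
        {q | ∃ p : {b : A.carrier // b ≠ m}, A.le p.1 m ∧ g s (some p) = q} with hV
      set x : (W.force).carrier := Sum.inr (s, V, g (!s) none) with hx
      have fact1 : ∀ p : {b : A.carrier // b ≠ m},
          lQ (Sum.inl (s, g s (some p))) (Sum.inl (s, g s none)) :=
        fun p => (glt (some p) none).1 trivial
      have fact2 : lQ (Sum.inl (!s, g (!s) none)) x := by
        exact h2 _ _ (Or.inr ⟨by cases s <;> simp, W.po.refl _⟩) (fun e => Sum.inl_ne_inr e)
      have fact3 : ∀ p : {b : A.carrier // b ≠ m},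
          lQ (Sum.inl (s, g s (some p))) x :=
        fun p => h1.trans _ _ _ (h1.trans _ _ _ (fact1 p) hs) fact2
      refine ⟨fun b => (if h : b = m then x else Sum.inl (s, g s (some (⟨b, h⟩ : (A.erase m).carrier))) : (W.force).carrier), ?_, ?_, ?_⟩
      · intro a b e
        dsimp only at e
        by_cases ha : a = m <;> by_cases hb : b = m
        · exact ha.trans hb.symm
        · erw [dif_pos ha, dif_neg hb] at e; exact (Sum.inr_ne_inl e).elim
        · erw [dif_neg ha, dif_pos hb] at e; exact (Sum.inl_ne_inr e).elim
        · erw [dif_neg ha, dif_neg hb] at e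
          have e2 := congrArg Prod.snd (Sum.inl.inj e)
          exact congrArg Subtype.val (Option.some.inj (ginj e2))
      · intro a b
        dsimp only
        by_cases ha : a = m <;> by_cases hb : b = m
        · erw [dif_pos ha, dif_pos hb, ha, hb]
          exact iff_of_true (A.po.refl m) rfl
        · erw [dif_pos ha, dif_neg hb, ha]
          exact iff_of_false (hmle b hb) (fun h => h)
        · erw [dif_neg ha, dif_pos hb, hb]
          constructor
          · intro hle
            exact Or.inl ⟨rfl, g s (some ⟨a, ha⟩), ⟨⟨a, ha⟩, hle, rfl⟩, W.po.refl _⟩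
          · rintro (⟨-, v, ⟨p, hpm, rfl⟩, hv⟩ | ⟨hss, -⟩)
            · have hab : ((A.erase m).addTop).le (some ⟨a, ha⟩) (some p) := (gle _ _).2 hv
              exact A.po.trans _ _ _ hab hpm
            · exact absurd rfl hss
        · erw [dif_neg ha, dif_neg hb]
          constructor
          · intro hle
            exact ⟨rfl, (gle (some ⟨a, ha⟩) (some ⟨b, hb⟩)).1 hle⟩
          · rintro ⟨-, h⟩
            exact (gle (some ⟨a, ha⟩) (some ⟨b, hb⟩)).2 h
      · intro a b
        dsimp only
        by_cases ha : a = m <;> by_cases hb : b = m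
        · erw [dif_pos ha, dif_pos hb, ha, hb]
          exact iff_of_false (A.sto.irrefl m) (h1.irrefl x)
        · erw [dif_pos ha, dif_neg hb, ha]
          refine iff_of_false (fun h => sto_asymm A.sto h (hm b hb)) ?_
          exact fun h => sto_asymm h1 h (fact3 ⟨b, hb⟩)
        · erw [dif_neg ha, dif_pos hb, hb]
          exact iff_of_true (hm a ha) (fact3 ⟨a, ha⟩)
        · erw [dif_neg ha, dif_neg hb]
          exact glt (some ⟨a, ha⟩) (some ⟨b, hb⟩)

lemma embeds_dsum_left (P Q : FPoset) (A : LOP)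
    (h : ∀ lQ h1 h2, A.Embeds (P.toLOP lQ h1 h2)) :
    ∀ lQ h1 h2, A.Embeds ((P.dsum Q).toLOP lQ h1 h2) := by
  intro lQ h1 h2
  have hinj : Function.Injective
      (fun a : P.carrier => (Sum.inl a : (P.dsum Q).carrier)) :=
    fun a b e => Sum.inl.inj e
  have h1' := sto_comap h1 hinj
  have h2' : ∀ a b : P.carrier, P.le a b → a ≠ b → lQ (Sum.inl a) (Sum.inl b) :=
    fun a b hle hne => h2 _ _ hle (fun e => hne (Sum.inl.inj e))
  obtain ⟨f, finj, fle, flt⟩ := h _ h1' h2'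
  exact ⟨fun a => Sum.inl (f a), fun a b e => finj (Sum.inl.inj e),
    fun a b => fle a b, fun a b => flt a b⟩

lemma embeds_dsum_right (P Q : FPoset) (A : LOP)
    (h : ∀ lQ h1 h2, A.Embeds (Q.toLOP lQ h1 h2)) :
    ∀ lQ h1 h2, A.Embeds ((P.dsum Q).toLOP lQ h1 h2) := by
  intro lQ h1 h2
  have hinj : Function.Injective
      (fun a : Q.carrier => (Sum.inr a : (P.dsum Q).carrier)) :=
    fun a b e => Sum.inr.inj e
  have h1' := sto_comap h1 hinj
  have h2' : ∀ a b : Q.carrier, Q.le a b → a ≠ b → lQ (Sum.inr a) (Sum.inr b) :=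
    fun a b hle hne => h2 _ _ hle (fun e => hne (Sum.inr.inj e))
  obtain ⟨f, finj, fle, flt⟩ := h _ h1' h2'
  exact ⟨fun a => Sum.inr (f a), fun a b e => finj (Sum.inr.inj e),
    fun a b => fle a b, fun a b => flt a b⟩

lemma key_list (L : List LOP) :
    ∃ Q : FPoset, ∀ A ∈ L, ∀ lQ h1 h2, A.Embeds (Q.toLOP lQ h1 h2) := by
  induction L with
  | nil =>
    refine ⟨⟨PEmpty, inferInstance, fun _ _ => True,
      { refl := fun _ => trivial, trans := fun _ _ _ _ _ => trivial,
        antisymm := fun a _ _ _ => a.elim }⟩, ?_⟩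
    simp
  | cons A L ih =>
    obtain ⟨Q2, hQ2⟩ := ih
    obtain ⟨Q1, hQ1⟩ := key (Nat.card A.carrier + incs A) A le_rfl
    refine ⟨Q1.dsum Q2, ?_⟩
    intro B hB lQ h1 h2
    rcases List.mem_cons.1 hB with rfl | hB'
    · exact embeds_dsum_left _ _ _ hQ1 lQ h1 h2
    · exact embeds_dsum_right _ _ _ (fun l a b => hQ2 B hB' l a b) lQ h1 h2

/-- The ordering property for the class of all finite linearly ordered posets:
for every finite poset `(A, ⊑)` there is a finite poset `(B, ⊑_B)` such that for
every linear extension `<` of `⊑` and every linear extension `⊏` of `⊑_B`,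
`(A, ⊑, <)` embeds into `(B, ⊑_B, ⊏)`. -/
theorem stmt_6 :
    ∀ P : FPoset, ∃ Q : FPoset,
      ∀ lP h1P h2P lQ h1Q h2Q,
        (P.toLOP lP h1P h2P).Embeds (Q.toLOP lQ h1Q h2Q) := by
  intro P
  classical
  letI := P.finite
  haveI : Finite Prop := Finite.of_equiv Bool Equiv.propEquivBool.symm
  haveI : Finite {r : P.carrier → P.carrier → Prop //
      IsStrictTotalOrder P.carrier r ∧ ∀ a b, P.le a b → a ≠ b → r a b} := by
    infer_instance
  haveI := Fintype.ofFinite {r : P.carrier → P.carrier → Prop //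
      IsStrictTotalOrder P.carrier r ∧ ∀ a b, P.le a b → a ≠ b → r a b}
  have HK := key_list
    (((Finset.univ : Finset {r : P.carrier → P.carrier → Prop //
      IsStrictTotalOrder P.carrier r ∧ ∀ a b, P.le a b → a ≠ b → r a b})).toList.map
      (fun r => P.toLOP r.val r.property.1 r.property.2))
  obtain ⟨Q, hQ⟩ := HK
  refine ⟨Q, ?_⟩
  intro lP h1P h2P lQ h1Q h2Q
  exact hQ (P.toLOP lP h1P h2P)
    (List.mem_map.2 ⟨⟨lP, h1P, h2P⟩, Finset.mem_toList.2 (Finset.mem_univ _), rfl⟩)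
    lQ h1Q h2Q
end

section
/- For every finite poset T = ({1, …, n}, ≼) (the template), the class P⃗_T^fin of finite linearly ordered multiposets conforming to T has the ordering property: for every finite consistent multiposet (A, ⊑_1, …, ⊑_n) conforming to T there is a finite consistent multiposet (B, ⊑'_1, …, ⊑'_n) conforming to T such that (A, ⊑_1, …, ⊑_n, <) embeds into (B, ⊑'_1, …, ⊑'_n, ⊏) for every linear order < on A extending each ⊑_i and every linear order ⊏ on B extending each ⊑'_i. -/
/-- A finite multiposet with `n` partial orders `⊑_1, …, ⊑_n`. -/
structure MPoset (n : ℕ) : Type 1 where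
  carrier : Type
  finite : Finite carrier
  rel : Fin n → carrier → carrier → Prop
  po : ∀ i, IsPartialOrder carrier (rel i)

/-- A multiposet conforms to the template `t` if `⊑_i ⊆ ⊑_j` whenever `i ≼ j`. -/
def MPoset.Conforms {n : ℕ} (A : MPoset n) (t : Fin n → Fin n → Prop) : Prop :=
  ∀ i j, t i j → ∀ a b, A.rel i a b → A.rel j a b

/-- A multiposet is consistent if some linear order extends every `⊑_i`. -/
def MPoset.Consistent {n : ℕ} (A : MPoset n) : Prop :=
  ∃ l : A.carrier → A.carrier → Prop, IsStrictTotalOrder A.carrier l ∧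
    ∀ i a b, A.rel i a b → a ≠ b → l a b

namespace MPoset

variable {n : ℕ}

lemma rrefl (A : MPoset n) (i : Fin n) (a : A.carrier) : A.rel i a a :=
  (A.po i).toIsPreorder.toRefl.refl a

lemma rtrans (A : MPoset n) (i : Fin n) {a b c : A.carrier}
    (h1 : A.rel i a b) (h2 : A.rel i b c) : A.rel i a c :=
  (A.po i).toIsPreorder.toIsTrans.trans _ _ _ h1 h2

lemma rantisymm (A : MPoset n) (i : Fin n) {a b : A.carrier}
    (h1 : A.rel i a b) (h2 : A.rel i b a) : a = b :=
  (A.po i).toAntisymm.antisymm _ _ h1 h2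

end MPoset

namespace OPProof

variable {n : ℕ}

lemma mk_eq_mk {ι : Type} {β : ι → Type} {j j2 : ι} {w : β j} {v : β j2}
    (h : (⟨j, w⟩ : Σ j, β j) = ⟨j2, v⟩) : ∃ _ : j = j2, HEq w v :=
  ⟨congrArg Sigma.fst h, by cases h; rfl⟩

lemma tri_mk {α : Type} {r : α → α → Prop} (h : ∀ a b, r a b ∨ a = b ∨ r b a) :
    Std.Trichotomous r :=
  Std.trichotomous_of_rel_or_eq_or_rel_swap (fun {a b} => h a b)

lemma tri_of {α : Type} {r : α → α → Prop} (h : IsStrictTotalOrder α r) (a b : α) :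
    r a b ∨ a = b ∨ r b a :=
  Std.Trichotomous.rel_or_eq_or_rel_swap (i := h.toTrichotomous)

lemma exists_sto (α : Type) [Finite α] : ∃ r : α → α → Prop, IsStrictTotalOrder α r := by
  obtain ⟨m, ⟨e⟩⟩ := Finite.exists_equiv_fin α
  refine ⟨fun x y => e x < e y, { toTrichotomous := tri_mk ?_, irrefl := ?_, trans := ?_ }⟩
  · intro a b
    rcases lt_trichotomy (e a) (e b) with h | h | h
    · exact Or.inl h
    · exact Or.inr (Or.inl (e.injective h))
    · exact Or.inr (Or.inr h)
  · intro a h; exact lt_irrefl _ h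
  · intro a b c h1 h2; exact lt_trans h1 h2

def unitMP (n : ℕ) : MPoset n where
  carrier := PUnit
  finite := inferInstance
  rel _ x y := x = y
  po _ := { refl := fun _ => rfl, trans := fun _ _ _ h1 h2 => h1.trans h2,
            antisymm := fun _ _ h _ => h }

def dropMP (A : MPoset n) (a : A.carrier) : MPoset n where
  carrier := {b : A.carrier // b ≠ a}
  finite := by haveI := A.finite; infer_instance
  rel i x y := A.rel i x.1 y.1
  po i := { refl := fun x => A.rrefl i x.1,
            trans := fun _ _ _ h1 h2 => A.rtrans i h1 h2,
            antisymm := fun _ _ h1 h2 => Subtype.ext (A.rantisymm i h1 h2) }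

def sigmaMP {ι : Type} [Finite ι] (F : ι → MPoset n) : MPoset n where
  carrier := Σ j : ι, (F j).carrier
  finite := by haveI := fun j => (F j).finite; infer_instance
  rel i x y := ∃ (j : ι) (w w' : (F j).carrier),
      (F j).rel i w w' ∧ x = ⟨j, w⟩ ∧ y = ⟨j, w'⟩
  po i := by
    refine { refl := fun x => ⟨x.1, x.2, x.2, (F x.1).rrefl i x.2, ?_, ?_⟩,
             trans := ?_, antisymm := ?_ }
    · cases x; rfl
    · cases x; rfl
    · rintro x y z ⟨j, w, w', h, rfl, rfl⟩ ⟨j2, v, v', h2, hy, rfl⟩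
      obtain ⟨rfl, hv⟩ := mk_eq_mk hy
      cases eq_of_heq hv
      exact ⟨j, w, v', (F j).rtrans i h h2, rfl, rfl⟩
    · rintro x y ⟨j, w, w', h, rfl, rfl⟩ ⟨j2, v, v', h2, hy, hx⟩
      obtain ⟨rfl, hv⟩ := mk_eq_mk hy
      cases eq_of_heq hv
      obtain ⟨-, hv'⟩ := mk_eq_mk hx
      cases eq_of_heq hv'
      exact congrArg (Sigma.mk j) ((F j).rantisymm i h h2)

lemma sigmaMP_rel_mk {ι : Type} [Finite ι] {F : ι → MPoset n} {i : Fin n} {j : ι}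
    {w w' : (F j).carrier} :
    (sigmaMP F).rel i ⟨j, w⟩ ⟨j, w'⟩ ↔ (F j).rel i w w' := by
  constructor
  · rintro ⟨j2, v, v', h, h1, h2⟩
    obtain ⟨rfl, hv⟩ := mk_eq_mk h1
    cases eq_of_heq hv
    obtain ⟨-, hv'⟩ := mk_eq_mk h2
    cases eq_of_heq hv'
    exact h
  · intro h; exact ⟨j, w, w', h, rfl, rfl⟩

lemma sigmaMP_rel_fst {ι : Type} [Finite ι] {F : ι → MPoset n} {i : Fin n}
    {x y : (sigmaMP F).carrier} (h : (sigmaMP F).rel i x y) : x.1 = y.1 := by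
  obtain ⟨j, w, w', _, rfl, rfl⟩ := h; rfl

lemma sigmaMP_conforms {ι : Type} [Finite ι] {F : ι → MPoset n}
    {t : Fin n → Fin n → Prop} (h : ∀ j, (F j).Conforms t) :
    (sigmaMP F).Conforms t := by
  rintro i i' hii' x y ⟨j, w, w', hr, rfl, rfl⟩
  exact ⟨j, w, w', h j _ _ hii' _ _ hr, rfl, rfl⟩

lemma sigmaMP_consistent {ι : Type} [Finite ι] {F : ι → MPoset n}
    (hc : ∀ j, (F j).Consistent) : (sigmaMP F).Consistent := by
  classical
  choose ℓ hSTO hext using hc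
  obtain ⟨rι, hrι⟩ := exists_sto ι
  refine ⟨fun x y => rι x.1 y.1 ∨ ∃ (j : ι) (w w' : (F j).carrier),
      ℓ j w w' ∧ x = ⟨j, w⟩ ∧ y = ⟨j, w'⟩,
    { toTrichotomous := tri_mk ?_, irrefl := ?_, trans := ?_ }, ?_⟩
  · rintro ⟨j, w⟩ ⟨j2, v⟩
    rcases tri_of hrι j j2 with h | h | h
    · exact Or.inl (Or.inl h)
    · subst h
      rcases tri_of (hSTO j) w v with h | h | h
      · exact Or.inl (Or.inr ⟨j, w, v, h, rfl, rfl⟩)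
      · exact Or.inr (Or.inl (congrArg (Sigma.mk j) h))
      · exact Or.inr (Or.inr (Or.inr ⟨j, v, w, h, rfl, rfl⟩))
    · exact Or.inr (Or.inr (Or.inl h))
  · rintro ⟨j, w⟩ (h | ⟨j2, v, v', h, h1, h2⟩)
    · exact hrι.irrefl _ h
    · obtain ⟨rfl, hv⟩ := mk_eq_mk h1
      cases eq_of_heq hv
      obtain ⟨-, hv'⟩ := mk_eq_mk h2
      cases eq_of_heq hv'
      exact (hSTO j).irrefl _ h
  · rintro x y z (h1 | ⟨j, w, w', h1, rfl, rfl⟩) (h2 | ⟨j2, v, v', h2, hy, rfl⟩)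
    · exact Or.inl (hrι.trans _ _ _ h1 h2)
    · subst hy
      exact Or.inl h1
    · exact Or.inl h2
    · obtain ⟨rfl, hv⟩ := mk_eq_mk hy
      cases eq_of_heq hv
      exact Or.inr ⟨j, w, v', (hSTO j).trans _ _ _ h1 h2, rfl, rfl⟩
  · rintro i x y ⟨j, w, w', h, rfl, rfl⟩ hne
    refine Or.inr ⟨j, w, w', hext j i w w' h ?_, rfl, rfl⟩
    rintro rfl; exact hne rfl


section AddTops

variable (t : Fin n → Fin n → Prop)

def addTops (C : MPoset n) : MPoset n where
  carrier := C.carrier ⊕ (Fin n → Set C.carrier)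
  finite := by haveI := C.finite; infer_instance
  rel i x y :=
    match x, y with
    | Sum.inl c, Sum.inl c' => C.rel i c c'
    | Sum.inl c, Sum.inr E => ∃ j e, (t j i ∨ j = i) ∧ e ∈ E j ∧ C.rel i c e
    | Sum.inr _, Sum.inl _ => False
    | Sum.inr E, Sum.inr E' => E = E'
  po i := by
    refine { refl := ?_, trans := ?_, antisymm := ?_ }
    · rintro (c | E)
      · exact C.rrefl i c
      · rfl
    · rintro (c | E) (c' | E') (c'' | E'') h1 h2
      · exact C.rtrans i h1 h2
      · obtain ⟨j, e, hj, he, hc⟩ := h2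
        exact ⟨j, e, hj, he, C.rtrans i h1 hc⟩
      · exact h2.elim
      · exact h2 ▸ h1
      · exact h1.elim
      · exact h1.elim
      · exact h2.elim
      · exact h1.trans h2
    · rintro (c | E) (c' | E') h1 h2
      · exact congrArg Sum.inl (C.rantisymm i h1 h2)
      · exact h2.elim
      · exact h1.elim
      · exact congrArg Sum.inr h1

lemma addTops_conforms (htt : ∀ {i j k : Fin n}, t i j → t j k → t i k)
    {C : MPoset n} (hC : C.Conforms t) : (addTops t C).Conforms t := by
  rintro i i' hii' (c | E) (c' | E') h
  · exact hC _ _ hii' _ _ h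
  · obtain ⟨j, e, hj, he, hc⟩ := h
    refine ⟨j, e, ?_, he, hC _ _ hii' _ _ hc⟩
    rcases hj with hj | rfl
    · exact Or.inl (htt hj hii')
    · exact Or.inl hii'
  · exact h.elim
  · exact h

lemma addTops_consistent {C : MPoset n} (hC : C.Consistent) :
    (addTops t C).Consistent := by
  obtain ⟨ℓC, hℓC, hextC⟩ := hC
  haveI := C.finite
  obtain ⟨ℓX, hℓX⟩ := exists_sto (Fin n → Set C.carrier)
  refine ⟨fun x y =>
    match x, y with
    | Sum.inl c, Sum.inl c' => ℓC c c'
    | Sum.inl _, Sum.inr _ => True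
    | Sum.inr _, Sum.inl _ => False
    | Sum.inr E, Sum.inr E' => ℓX E E',
    { toTrichotomous := tri_mk ?_, irrefl := ?_, trans := ?_ }, ?_⟩
  · rintro (c | E) (c' | E')
    · rcases tri_of hℓC c c' with h | h | h
      · exact Or.inl h
      · exact Or.inr (Or.inl (congrArg _ h))
      · exact Or.inr (Or.inr h)
    · exact Or.inl trivial
    · exact Or.inr (Or.inr trivial)
    · rcases tri_of hℓX E E' with h | h | h
      · exact Or.inl h
      · exact Or.inr (Or.inl (congrArg _ h))
      · exact Or.inr (Or.inr h)
  · rintro (c | E) h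
    · exact hℓC.irrefl _ h
    · exact hℓX.irrefl _ h
  · rintro (c | E) (c' | E') (c'' | E'') h1 h2 <;>
      first
        | exact hℓC.trans _ _ _ h1 h2
        | exact hℓX.trans _ _ _ h1 h2
        | trivial
  · rintro i (c | E) (c' | E') h hne
    · exact hextC i _ _ h (fun hcc => hne (congrArg _ hcc))
    · trivial
    · exact h.elim
    · exact absurd (h : E = E') (fun hEE => hne (congrArg _ hEE))

end AddTops


section Main

variable (t : Fin n → Fin n → Prop)

/-- A maximum for a strict total order on a nonempty finite set. -/
lemma sto_max {α : Type} (r : α → α → Prop) (h : IsStrictTotalOrder α r)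
    (S : Finset α) (hS : S.Nonempty) : ∃ m ∈ S, ∀ x ∈ S, x ≠ m → r x m := by
  classical
  induction S using Finset.induction_on with
  | empty => exact absurd hS (by simp)
  | @insert a S ha ih =>
    rcases Finset.eq_empty_or_nonempty S with h0 | h0
    · subst h0
      exact ⟨a, by simp, by simp⟩
    · obtain ⟨m, hmS, hm⟩ := ih h0
      rcases tri_of h a m with hr | he | hr
      · refine ⟨m, Finset.mem_insert_of_mem hmS, ?_⟩
        intro x hx hxm
        rcases Finset.mem_insert.1 hx with rfl | hx
        · exact hr
        · exact hm x hx hxm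
      · refine ⟨m, Finset.mem_insert_of_mem hmS, fun x hx hxm => ?_⟩
        rcases Finset.mem_insert.1 hx with rfl | hx
        · exact absurd he hxm
        · exact hm x hx hxm
      · refine ⟨a, Finset.mem_insert_self a _, ?_⟩
        intro x hx hxa
        rcases Finset.mem_insert.1 hx with rfl | hx
        · exact absurd rfl hxa
        · rcases tri_of h x m with h1 | h1 | h1
          · exact h.trans _ _ _ h1 hr
          · exact h1 ▸ hr
          · by_cases hxm : x = m
            · exact hxm ▸ hr
            · exact absurd (h.trans _ _ _ h1 (hm x hx hxm)) (h.irrefl m)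

def Emb (A B : MPoset n) : Prop :=
  ∀ (lA : A.carrier → A.carrier → Prop), IsStrictTotalOrder A.carrier lA →
    (∀ i a b, A.rel i a b → a ≠ b → lA a b) →
    ∀ (lB : B.carrier → B.carrier → Prop), IsStrictTotalOrder B.carrier lB →
    (∀ i a b, B.rel i a b → a ≠ b → lB a b) →
    ∃ f : A.carrier → B.carrier, Function.Injective f ∧
      (∀ i a b, A.rel i a b ↔ B.rel i (f a) (f b)) ∧
      (∀ a b, lA a b ↔ lB (f a) (f b))

lemma emb_of_empty (A : MPoset n) (hA : A.Conforms t) (hE : IsEmpty A.carrier) :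
    ∃ B : MPoset n, B.Conforms t ∧ B.Consistent ∧ Emb A B := by
  refine ⟨A, hA, ⟨fun _ _ => False,
    { trichotomous := fun a => hE.elim a, irrefl := fun a => hE.elim a,
      trans := fun a => hE.elim a }, fun i a => hE.elim a⟩, ?_⟩
  intro lA _ _ lB _ _
  exact ⟨id, fun a => hE.elim a, fun i a => hE.elim a, fun a => hE.elim a⟩

theorem key (ht : IsPartialOrder (Fin n) t) (hn : n ≠ 0) :
    ∀ (k : ℕ) (A : MPoset n), A.Conforms t → Nat.card A.carrier ≤ k →
      ∃ B : MPoset n, B.Conforms t ∧ B.Consistent ∧ Emb A B := by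
  have httrans : ∀ {i j k : Fin n}, t i j → t j k → t i k :=
    fun h1 h2 => ht.toIsPreorder.toIsTrans.trans _ _ _ h1 h2
  intro k
  induction k with
  | zero =>
    intro A hA hcard
    haveI := A.finite
    refine emb_of_empty t A hA ?_
    rcases Nat.card_eq_zero.mp (Nat.le_zero.mp hcard) with h | h
    · exact h
    · exact absurd h (not_infinite_iff_finite.mpr A.finite)
  | succ k ih =>
    intro A hA hcard
    haveI := A.finite
    by_cases hE : IsEmpty A.carrier
    · exact emb_of_empty t A hA hE
    have hNE : Nonempty A.carrier := not_isEmpty_iff.mp hE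
    classical
    haveI : Fintype A.carrier := Fintype.ofFinite _
    -- witnesses for one-point deletions
    have ihdrop : ∀ a : A.carrier, ∃ B : MPoset n,
        B.Conforms t ∧ B.Consistent ∧ Emb (dropMP A a) B := by
      intro a
      refine ih (dropMP A a) ?_ ?_
      · intro i j hij x y hxy
        exact hA i j hij _ _ hxy
      · have h1 : Nat.card (dropMP A a).carrier < Nat.card A.carrier :=
          Finite.card_subtype_lt (p := fun b => b ≠ a) (x := a) (by simp)
        omega
    choose W hWconf hWcons hWemb using ihdrop
    -- the core: a dummy point plus two blocks for every deletion
    let famF : Option (A.carrier × Bool) → MPoset n := fun j =>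
      match j with
      | none => unitMP n
      | some q => W q.1
    let Core : MPoset n := sigmaMP famF
    have hCoreConf : Core.Conforms t := by
      apply sigmaMP_conforms
      rintro (_ | q)
      · intro i j hij a b h; exact h
      · exact hWconf q.1
    have hCoreCons : Core.Consistent := by
      apply sigmaMP_consistent
      rintro (_ | q)
      · refine ⟨fun _ _ => False, { toTrichotomous := tri_mk ?_, irrefl := ?_, trans := ?_ }, ?_⟩
        · intro a b
          refine Or.inr (Or.inl ?_)
          exact Subsingleton.elim (α := PUnit) a b
        · intro a h; exact h
        · intro a b c h; exact h.elim
        · intro i a b h hne; exact absurd h hne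
      · exact hWcons q.1
    refine ⟨addTops t Core, addTops_conforms t httrans hCoreConf,
      addTops_consistent t hCoreCons, ?_⟩
    -- the embedding property
    intro lA hlA hlAext lB hlB hlBext
    -- the lA-maximum of A
    haveI : Nonempty A.carrier := hNE
    obtain ⟨ak, -, hak'⟩ := sto_max lA hlA Finset.univ Finset.univ_nonempty
    have hak : ∀ x : A.carrier, x ≠ ak → lA x ak := fun x hx => hak' x (Finset.mem_univ x) hx
    have hmaxrel : ∀ i b, A.rel i ak b → b = ak := by
      intro i b h
      by_contra hne
      exact hlA.irrefl ak (hlA.trans _ _ _ (hlAext i ak b h (fun hh => hne hh.symm)) (hak b hne))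
    -- the lB-maximum of the core part
    haveI := Core.finite
    haveI : Fintype Core.carrier := Fintype.ofFinite _
    have hlBC : IsStrictTotalOrder Core.carrier
        (fun c c' => lB (Sum.inl c) (Sum.inl c')) := by
      refine { toTrichotomous := tri_mk ?_, irrefl := ?_, trans := ?_ }
      · intro a b
        rcases tri_of hlB (Sum.inl a) (Sum.inl b) with h | h | h
        · exact Or.inl h
        · exact Or.inr (Or.inl (Sum.inl_injective h))
        · exact Or.inr (Or.inr h)
      · intro a h; exact hlB.irrefl _ h
      · intro a b c h1 h2; exact hlB.trans _ _ _ h1 h2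
    haveI : Nonempty Core.carrier := ⟨⟨none, PUnit.unit⟩⟩
    obtain ⟨cstar, -, hcmax'⟩ := sto_max _ hlBC Finset.univ Finset.univ_nonempty
    have hcmax : ∀ c : Core.carrier, c ≠ cstar → lB (Sum.inl c) (Sum.inl cstar) :=
      fun c hc => hcmax' c (Finset.mem_univ c) hc
    -- choose a block avoiding cstar
    obtain ⟨ι, hιne⟩ : ∃ ι : Bool, (some (ak, ι) : Option (A.carrier × Bool)) ≠ cstar.1 := by
      by_cases h : cstar.1 = some (ak, true)
      · refine ⟨false, ?_⟩
        rw [h]; simp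
      · exact ⟨true, fun hcon => h hcon.symm⟩
    set p : Option (A.carrier × Bool) := some (ak, ι) with hp_def
    let inc : (W ak).carrier → (addTops t Core).carrier := fun w => Sum.inl ⟨p, w⟩
    have hinc_inj : Function.Injective inc := by
      intro w w' h
      have h2 : (⟨p, w⟩ : Core.carrier) = ⟨p, w'⟩ := Sum.inl_injective h
      obtain ⟨-, hv⟩ := mk_eq_mk h2
      exact eq_of_heq hv
    -- restricted orders
    let lA' : (dropMP A ak).carrier → (dropMP A ak).carrier → Prop := fun x y => lA x.1 y.1
    have hlA' : IsStrictTotalOrder _ lA' := by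
      refine { toTrichotomous := tri_mk ?_, irrefl := ?_, trans := ?_ }
      · intro a b
        rcases tri_of hlA a.1 b.1 with h | h | h
        · exact Or.inl h
        · exact Or.inr (Or.inl (Subtype.ext h))
        · exact Or.inr (Or.inr h)
      · intro a h; exact hlA.irrefl _ h
      · intro a b c h1 h2; exact hlA.trans _ _ _ h1 h2
    have hlA'ext : ∀ i a b, (dropMP A ak).rel i a b → a ≠ b → lA' a b := by
      intro i a b h hne
      exact hlAext i a.1 b.1 h (fun hh => hne (Subtype.ext hh))
    let lB' : (W ak).carrier → (W ak).carrier → Prop := fun w w' => lB (inc w) (inc w')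
    have hlB' : IsStrictTotalOrder _ lB' := by
      refine { toTrichotomous := tri_mk ?_, irrefl := ?_, trans := ?_ }
      · intro a b
        rcases tri_of hlB (inc a) (inc b) with h | h | h
        · exact Or.inl h
        · exact Or.inr (Or.inl (hinc_inj h))
        · exact Or.inr (Or.inr h)
      · intro a h; exact hlB.irrefl _ h
      · intro a b c h1 h2; exact hlB.trans _ _ _ h1 h2
    have hincrel : ∀ (i : Fin n) (w w' : (W ak).carrier),
        (addTops t Core).rel i (inc w) (inc w') ↔ (W ak).rel i w w' := by
      intro i w w'
      constructor
      · intro h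
        obtain ⟨j, v, v', hr, h1, h2⟩ := (h : Core.rel i ⟨p, w⟩ ⟨p, w'⟩)
        obtain ⟨hj, hv⟩ := mk_eq_mk h1
        subst hj
        cases eq_of_heq hv
        obtain ⟨-, hv'⟩ := mk_eq_mk h2
        cases eq_of_heq hv'
        exact hr
      · intro h
        exact (⟨p, w, w', h, rfl, rfl⟩ : Core.rel i ⟨p, w⟩ ⟨p, w'⟩)
    have hlB'ext : ∀ i a b, (W ak).rel i a b → a ≠ b → lB' a b := by
      intro i a b h hne
      refine hlBext i (inc a) (inc b) ((hincrel i a b).mpr h) ?_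
      intro hh; exact hne (hinc_inj hh)
    obtain ⟨g, hginj, hgrel, hgord⟩ := hWemb ak lA' hlA' hlA'ext lB' hlB' hlB'ext
    -- the top element
    let E : Fin n → Set Core.carrier := fun i =>
      {c | (∃ b : {b : A.carrier // b ≠ ak}, A.rel i b.1 ak ∧
              Core.rel i c ⟨p, g b⟩) ∨ Core.rel i c cstar}
    let f : A.carrier → (addTops t Core).carrier := fun b =>
      if h : b = ak then Sum.inr E else inc (g ⟨b, h⟩)
    have hconv : ∀ {j i : Fin n}, (t j i ∨ j = i) → ∀ {x y : Core.carrier},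
        Core.rel j x y → Core.rel i x y := by
      rintro j i (hj | rfl) x y h
      · exact hCoreConf j i hj x y h
      · exact h
    have hAconv : ∀ {j i : Fin n}, (t j i ∨ j = i) → ∀ {x y : A.carrier},
        A.rel j x y → A.rel i x y := by
      rintro j i (hj | rfl) x y h
      · exact hA j i hj x y h
      · exact h
    have hcrossfalse : ∀ (i : Fin n) (w : (W ak).carrier),
        ¬ Core.rel i ⟨p, w⟩ cstar := by
      intro i w h
      exact hιne (sigmaMP_rel_fst h)
    have htrace : ∀ (i : Fin n) (b : A.carrier) (hb : b ≠ ak),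
        ((addTops t Core).rel i (inc (g ⟨b, hb⟩)) (Sum.inr E) ↔ A.rel i b ak) := by
      intro i b hb
      constructor
      · rintro ⟨j, e, hj, heEj, hce⟩
        rcases heEj with ⟨b', hb'rel, hceb'⟩ | hcstar
        · have h1 : Core.rel i (⟨p, g ⟨b, hb⟩⟩ : Core.carrier) ⟨p, g b'⟩ :=
            Core.rtrans i hce (hconv hj hceb')
          have h2 : (W ak).rel i (g ⟨b, hb⟩) (g b') := by
            obtain ⟨jj, v, v', hr, hh1, hh2⟩ := h1
            obtain ⟨hjj, hv⟩ := mk_eq_mk hh1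
            subst hjj
            cases eq_of_heq hv
            obtain ⟨-, hv'⟩ := mk_eq_mk hh2
            cases eq_of_heq hv'
            exact hr
          have h3 : A.rel i b b'.1 := (hgrel i ⟨b, hb⟩ b').mpr h2
          exact A.rtrans i h3 (hAconv hj hb'rel)
        · exact absurd (Core.rtrans i hce (hconv hj hcstar)) (hcrossfalse i _)
      · intro h
        exact ⟨i, ⟨p, g ⟨b, hb⟩⟩, Or.inr rfl,
          Or.inl ⟨⟨b, hb⟩, h, Core.rrefl i _⟩, Core.rrefl i _⟩
    -- the top element is above everything in the core
    have hi0 : ∃ i0 : Fin n, True := ⟨⟨0, Nat.pos_of_ne_zero hn⟩, trivial⟩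
    obtain ⟨i0, -⟩ := hi0
    have hcstarE : (addTops t Core).rel i0 (Sum.inl cstar) (Sum.inr E) :=
      ⟨i0, cstar, Or.inr rfl, Or.inr (Core.rrefl i0 cstar), Core.rrefl i0 cstar⟩
    have htopabove : ∀ c : Core.carrier, lB (Sum.inl c) (Sum.inr E) := by
      intro c
      have h1 : lB (Sum.inl cstar) (Sum.inr E) :=
        hlBext i0 _ _ hcstarE Sum.inl_ne_inr
      by_cases hc : c = cstar
      · exact hc ▸ h1
      · exact hlB.trans _ _ _ (hcmax c hc) h1
    -- assemble
    refine ⟨f, ?_, ?_, ?_⟩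
    · intro b b' h
      by_cases hb : b = ak <;> by_cases hb' : b' = ak
      · exact hb.trans hb'.symm
      · rw [show f b = Sum.inr E from dif_pos hb, show f b' = inc (g ⟨b', hb'⟩) from dif_neg hb'] at h
        exact absurd h (by simp [inc])
      · rw [show f b = inc (g ⟨b, hb⟩) from dif_neg hb, show f b' = Sum.inr E from dif_pos hb'] at h
        exact absurd h (by simp [inc])
      · rw [show f b = inc (g ⟨b, hb⟩) from dif_neg hb,
          show f b' = inc (g ⟨b', hb'⟩) from dif_neg hb'] at h
        have := hginj (hinc_inj h)
        exact congrArg Subtype.val this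
    · intro i b b'
      by_cases hb : b = ak <;> by_cases hb' : b' = ak
      · have hbb' : b' = b := hb'.trans hb.symm
        rw [show f b = Sum.inr E from dif_pos hb,
          show f b' = Sum.inr E from dif_pos hb', hbb']
        exact ⟨fun _ => rfl, fun _ => A.rrefl i b⟩
      · rw [show f b = Sum.inr E from dif_pos hb,
          show f b' = inc (g ⟨b', hb'⟩) from dif_neg hb']
        constructor
        · intro h
          rw [hb] at h
          exact absurd (hmaxrel i b' h) hb'
        · intro h
          exact h.elim
      · rw [show f b = inc (g ⟨b, hb⟩) from dif_neg hb,
          show f b' = Sum.inr E from dif_pos hb', hb']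
        exact (htrace i b hb).symm
      · rw [show f b = inc (g ⟨b, hb⟩) from dif_neg hb,
          show f b' = inc (g ⟨b', hb'⟩) from dif_neg hb']
        exact (hgrel i ⟨b, hb⟩ ⟨b', hb'⟩).trans (hincrel i _ _).symm
    · intro b b'
      by_cases hb : b = ak <;> by_cases hb' : b' = ak
      · have hbb' : b' = b := hb'.trans hb.symm
        rw [show f b = Sum.inr E from dif_pos hb,
          show f b' = Sum.inr E from dif_pos hb', hbb']
        exact iff_of_false (hlA.irrefl b) (hlB.irrefl _)
      · rw [show f b = Sum.inr E from dif_pos hb,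
          show f b' = inc (g ⟨b', hb'⟩) from dif_neg hb']
        refine iff_of_false ?_ ?_
        · intro h
          have h2 : lA b' b := by rw [hb]; exact hak b' hb'
          exact hlA.irrefl b (hlA.trans _ _ _ h h2)
        · intro h
          exact hlB.irrefl _ (hlB.trans _ _ _ h (htopabove _))
      · rw [show f b = inc (g ⟨b, hb⟩) from dif_neg hb,
          show f b' = Sum.inr E from dif_pos hb']
        refine iff_of_true ?_ (htopabove _)
        rw [hb']
        exact hak b hb
      · rw [show f b = inc (g ⟨b, hb⟩) from dif_neg hb,
          show f b' = inc (g ⟨b', hb'⟩) from dif_neg hb']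
        exact hgord ⟨b, hb⟩ ⟨b', hb'⟩


lemma card_drop (γ : Type) [Finite γ] (c : γ) :
    Nat.card {x : γ // x ≠ c} + 1 = Nat.card γ := by
  classical
  haveI : Fintype γ := Fintype.ofFinite γ
  rw [Nat.card_eq_fintype_card, Nat.card_eq_fintype_card]
  have h := Fintype.card_subtype_compl (p := fun x : γ => x = c)
  rw [Fintype.card_subtype_eq] at h
  have he : Fintype.card {x : γ // x ≠ c} = Fintype.card {x : γ // ¬ x = c} :=
    Fintype.card_congr (Equiv.subtypeEquivRight (fun x => Iff.rfl))
  have hpos : 1 ≤ Fintype.card γ := Fintype.card_pos_iff.mpr ⟨c⟩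
  omega

lemma sto_iso2 : ∀ (k : ℕ) (α β : Type), Finite α → Finite β →
    ∀ (r : α → α → Prop) (s : β → β → Prop),
    IsStrictTotalOrder α r → IsStrictTotalOrder β s →
    Nat.card α = k → Nat.card β = k →
    ∃ f : α → β, Function.Injective f ∧ ∀ a b, r a b ↔ s (f a) (f b) := by
  intro k
  induction k with
  | zero =>
    intro α β hfa hfb r s hr hs hca hcb
    haveI := hfa; haveI := hfb
    have hE : IsEmpty α := by
      rcases Nat.card_eq_zero.mp hca with h | h
      · exact h
      · exact absurd h (not_infinite_iff_finite.mpr hfa)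
    exact ⟨fun a => hE.elim a, fun a => hE.elim a, fun a => hE.elim a⟩
  | succ k ih =>
    intro α β hfa hfb r s hr hs hca hcb
    haveI := hfa; haveI := hfb
    classical
    haveI : Fintype α := Fintype.ofFinite α
    haveI : Fintype β := Fintype.ofFinite β
    haveI : Nonempty α := by
      rcases Nat.eq_zero_or_pos (Nat.card α) with h | h
      · rw [hca] at h; omega
      · exact (Nat.card_pos_iff.mp h).1
    haveI : Nonempty β := by
      rcases Nat.eq_zero_or_pos (Nat.card β) with h | h
      · rw [hcb] at h; omega
      · exact (Nat.card_pos_iff.mp h).1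
    obtain ⟨a, -, ha'⟩ := sto_max r hr Finset.univ Finset.univ_nonempty
    obtain ⟨b, -, hb'⟩ := sto_max s hs Finset.univ Finset.univ_nonempty
    have ha : ∀ x, x ≠ a → r x a := fun x hx => ha' x (Finset.mem_univ x) hx
    have hb : ∀ x, x ≠ b → s x b := fun x hx => hb' x (Finset.mem_univ x) hx
    have hra : ∀ x, ¬ r a x := by
      intro x hx
      by_cases h : x = a
      · exact hr.irrefl a (h ▸ hx)
      · exact hr.irrefl a (hr.trans _ _ _ hx (ha x h))
    have hsb : ∀ x, ¬ s b x := by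
      intro x hx
      by_cases h : x = b
      · exact hs.irrefl b (h ▸ hx)
      · exact hs.irrefl b (hs.trans _ _ _ hx (hb x h))
    have hcα : Nat.card {x : α // x ≠ a} = k := by
      have := card_drop α a; omega
    have hcβ : Nat.card {x : β // x ≠ b} = k := by
      have := card_drop β b; omega
    have hr' : IsStrictTotalOrder {x : α // x ≠ a} (fun x y => r x.1 y.1) := by
      refine { toTrichotomous := tri_mk ?_, irrefl := ?_, trans := ?_ }
      · intro x y
        rcases tri_of hr x.1 y.1 with h | h | h
        · exact Or.inl h
        · exact Or.inr (Or.inl (Subtype.ext h))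
        · exact Or.inr (Or.inr h)
      · intro x h; exact hr.irrefl _ h
      · intro x y z h1 h2; exact hr.trans _ _ _ h1 h2
    have hs' : IsStrictTotalOrder {x : β // x ≠ b} (fun x y => s x.1 y.1) := by
      refine { toTrichotomous := tri_mk ?_, irrefl := ?_, trans := ?_ }
      · intro x y
        rcases tri_of hs x.1 y.1 with h | h | h
        · exact Or.inl h
        · exact Or.inr (Or.inl (Subtype.ext h))
        · exact Or.inr (Or.inr h)
      · intro x h; exact hs.irrefl _ h
      · intro x y z h1 h2; exact hs.trans _ _ _ h1 h2
    obtain ⟨f', hf'inj, hf'iff⟩ := ih {x : α // x ≠ a} {x : β // x ≠ b}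
      inferInstance inferInstance _ _ hr' hs' hcα hcβ
    let F : α → β := fun x => if h : x = a then b else (f' ⟨x, h⟩).1
    refine ⟨F, ?_, ?_⟩
    · intro x y h
      by_cases hx : x = a <;> by_cases hy : y = a
      · exact hx.trans hy.symm
      · rw [show F x = b from dif_pos hx, show F y = (f' ⟨y, hy⟩).1 from dif_neg hy] at h
        exact absurd h.symm (f' ⟨y, hy⟩).2
      · rw [show F x = (f' ⟨x, hx⟩).1 from dif_neg hx, show F y = b from dif_pos hy] at h
        exact absurd h (f' ⟨x, hx⟩).2
      · rw [show F x = (f' ⟨x, hx⟩).1 from dif_neg hx,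
          show F y = (f' ⟨y, hy⟩).1 from dif_neg hy] at h
        have := hf'inj (Subtype.ext h)
        exact congrArg Subtype.val this
    · intro x y
      by_cases hx : x = a <;> by_cases hy : y = a
      · rw [show F x = b from dif_pos hx, show F y = b from dif_pos hy, hx, hy]
        exact iff_of_false (hr.irrefl a) (hs.irrefl b)
      · rw [show F x = b from dif_pos hx, show F y = (f' ⟨y, hy⟩).1 from dif_neg hy, hx]
        exact iff_of_false (hra y) (hsb _)
      · rw [show F x = (f' ⟨x, hx⟩).1 from dif_neg hx, show F y = b from dif_pos hy, hy]
        exact iff_of_true (ha x hx) (hb _ (f' ⟨x, hx⟩).2)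
      · rw [show F x = (f' ⟨x, hx⟩).1 from dif_neg hx,
          show F y = (f' ⟨y, hy⟩).1 from dif_neg hy]
        exact hf'iff ⟨x, hx⟩ ⟨y, hy⟩

end Main

end OPProof

/-- For every template `t` (a partial order on `{1, …, n}`), the class of finite
linearly ordered multiposets conforming to `t` has the ordering property. -/
theorem stmt_13 (n : ℕ) (t : Fin n → Fin n → Prop)
    (ht : IsPartialOrder (Fin n) t) :
    ∀ A : MPoset n, A.Conforms t → A.Consistent →
      ∃ B : MPoset n, B.Conforms t ∧ B.Consistent ∧
        ∀ (lA : A.carrier → A.carrier → Prop)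
          (_ : IsStrictTotalOrder A.carrier lA)
          (_ : ∀ i a b, A.rel i a b → a ≠ b → lA a b)
          (lB : B.carrier → B.carrier → Prop)
          (_ : IsStrictTotalOrder B.carrier lB)
          (_ : ∀ i a b, B.rel i a b → a ≠ b → lB a b),
          ∃ f : A.carrier → B.carrier, Function.Injective f ∧
            (∀ i a b, A.rel i a b ↔ B.rel i (f a) (f b)) ∧
            (∀ a b, lA a b ↔ lB (f a) (f b)) := by
  intro A hA hcons
  by_cases hn : n = 0
  · subst hn
    refine ⟨A, hA, hcons, ?_⟩
    intro lA hlA _ lB hlB _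
    obtain ⟨f, hinj, hiff⟩ := OPProof.sto_iso2 (Nat.card A.carrier)
      A.carrier A.carrier A.finite A.finite lA lB hlA hlB rfl rfl
    exact ⟨f, hinj, fun i => i.elim0, hiff⟩
  · obtain ⟨B, h1, h2, h3⟩ := OPProof.key t ht hn (Nat.card A.carrier) A hA le_rfl
    exact ⟨B, h1, h2, h3⟩
end

section
/- Let T = ({1, …, n}, ≼) be a finite poset (template). For every two-element structure σ = ({a, b}, ⊑_1, …, ⊑_n, <) in P⃗_T^fin with a < b, there exists a structure (D, ⊑'_1, …, ⊑'_n, <_D) in P⃗_T^fin and elements x, y, z ∈ D with x <_D y <_D z such that the substructure of D on {x, z} is isomorphic to σ via a ↦ x, b ↦ z, and y is ⊑'_i-incomparable with both x and z for every i ∈ {1, …, n}. Consequently, P⃗_T^fin satisfies the weak triangle condition, witnessed by the two-element structure τ in which the two elements are incomparable in every partial order. -/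
/-- A finite linearly ordered multiposet with `n` partial orders
`⊑_1, …, ⊑_n` and a linear order `<` extending each of them (hence the
underlying multiposet is consistent). -/
structure OMPoset (n : ℕ) : Type 1 where
  carrier : Type
  finite : Finite carrier
  rel : Fin n → carrier → carrier → Prop
  po : ∀ i, IsPartialOrder carrier (rel i)
  lt : carrier → carrier → Prop
  sto : IsStrictTotalOrder carrier lt
  extend : ∀ i a b, rel i a b → a ≠ b → lt a b

/-- An ordered multiposet conforms to the template `t` if `⊑_i ⊆ ⊑_j`
whenever `i ≼ j`. -/
def OMPoset.Conforms {n : ℕ} (A : OMPoset n) (t : Fin n → Fin n → Prop) : Prop :=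
  ∀ i j, t i j → ∀ a b, A.rel i a b → A.rel j a b

/-- Embeddings of ordered multiposets. -/
def OMPoset.IsEmb {n : ℕ} (A B : OMPoset n) (f : A.carrier → B.carrier) : Prop :=
  Function.Injective f ∧
    (∀ i a b, A.rel i a b ↔ B.rel i (f a) (f b)) ∧
    (∀ a b, A.lt a b ↔ B.lt (f a) (f b))

/-- `S` is (the underlying set of) a substructure of `C` isomorphic to `A`. -/
def OMPoset.IsCopy {n : ℕ} (A C : OMPoset n) (S : Set C.carrier) : Prop :=
  ∃ f, A.IsEmb C f ∧ Set.range f = S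

/-- A two-element structure. -/
def OMPoset.TwoElem {n : ℕ} (A : OMPoset n) : Prop :=
  ∃ u v : A.carrier, u ≠ v ∧ ∀ c, c = u ∨ c = v

/-- Auxiliary: the 3-element extension. -/
def mkD {n : ℕ} (σ : OMPoset n) (a b : σ.carrier) : OMPoset n where
  carrier := Fin 3
  finite := inferInstance
  rel i x y := x = y ∨ (x = 0 ∧ y = 2 ∧ σ.rel i a b)
  po i :=
    { refl := fun x => Or.inl rfl
      trans := by
        rintro x y z (rfl | ⟨rfl, rfl, h⟩) h2
        · exact h2
        · rcases h2 with rfl | ⟨h0, -, -⟩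
          · exact Or.inr ⟨rfl, rfl, h⟩
          · exact absurd h0 (by decide)
      antisymm := by
        rintro x y (rfl | ⟨rfl, rfl, -⟩) h2
        · rfl
        · rcases h2 with h | ⟨h0, -, -⟩ <;> exact absurd ‹_› (by decide) }
  lt x y := x < y
  sto := inferInstance
  extend i x y h hne := by
    rcases h with rfl | ⟨rfl, rfl, -⟩
    · exact absurd rfl hne
    · decide

/-- Auxiliary: the two-element antichain. -/
def mkTau (n : ℕ) : OMPoset n where
  carrier := Fin 2
  finite := inferInstance
  rel _ x y := x = y
  po i :=
    { refl := fun x => rfl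
      trans := fun x y z h1 h2 => h1.trans h2
      antisymm := fun x y h _ => h }
  lt x y := x < y
  sto := inferInstance
  extend i x y h hne := absurd h hne

lemma sto_asymm_s14 {n : ℕ} (σ : OMPoset n) {a b : σ.carrier} (h : σ.lt a b) :
    ¬ σ.lt b a := by
  intro h'
  exact absurd (σ.sto.trans _ _ _ h h') (σ.sto.irrefl a)

lemma lt_ne {n : ℕ} (σ : OMPoset n) {a b : σ.carrier} (h : σ.lt a b) : a ≠ b := by
  rintro rfl; exact (σ.sto.irrefl a) h

lemma rel_ba_false {n : ℕ} (σ : OMPoset n) {a b : σ.carrier} (h : σ.lt a b)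
    (i : Fin n) : ¬ σ.rel i b a := by
  intro hr
  rcases eq_or_ne b a with rfl | hne
  · exact (σ.sto.irrefl b) h
  · exact sto_asymm_s14 σ h (σ.extend i b a hr hne)

/-- Core construction with all properties. -/
lemma mkD_spec {n : ℕ} (t : Fin n → Fin n → Prop) (σ : OMPoset n)
    (hc : σ.Conforms t) (a b : σ.carrier) (hab : σ.lt a b) :
    (mkD σ a b).Conforms t ∧
      (mkD σ a b).lt (0 : Fin 3) (1 : Fin 3) ∧ (mkD σ a b).lt (1 : Fin 3) (2 : Fin 3) ∧
      (∀ i, (σ.rel i a b ↔ (mkD σ a b).rel i (0 : Fin 3) (2 : Fin 3)) ∧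
        (σ.rel i b a ↔ (mkD σ a b).rel i (2 : Fin 3) (0 : Fin 3))) ∧
      (σ.lt a b ↔ (mkD σ a b).lt (0 : Fin 3) (2 : Fin 3)) ∧
      (σ.lt b a ↔ (mkD σ a b).lt (2 : Fin 3) (0 : Fin 3)) ∧
      (∀ i, ¬ (mkD σ a b).rel i (0 : Fin 3) (1 : Fin 3) ∧
        ¬ (mkD σ a b).rel i (1 : Fin 3) (0 : Fin 3) ∧
        ¬ (mkD σ a b).rel i (1 : Fin 3) (2 : Fin 3) ∧
        ¬ (mkD σ a b).rel i (2 : Fin 3) (1 : Fin 3)) := by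
  refine ⟨?_, (by decide : (0 : Fin 3) < 1), (by decide : (1 : Fin 3) < 2), ?_, ?_, ?_, ?_⟩
  · rintro i j hij p q (rfl | ⟨rfl, rfl, h⟩)
    · exact Or.inl rfl
    · exact Or.inr ⟨rfl, rfl, hc i j hij a b h⟩
  · intro i
    constructor
    · constructor
      · exact fun h => Or.inr ⟨rfl, rfl, h⟩
      · rintro (h | ⟨-, -, h⟩)
        · exact absurd h (by decide)
        · exact h
    · refine iff_of_false (rel_ba_false σ hab i) ?_
      rintro (h | ⟨h, -, -⟩) <;> exact absurd h (by decide)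
  · exact iff_of_true hab (by decide : (0 : Fin 3) < 2)
  · exact iff_of_false (sto_asymm_s14 σ hab) (by decide : ¬ ((2 : Fin 3) < 0))
  · intro i
    refine ⟨?_, ?_, ?_, ?_⟩ <;>
      · rintro (h | ⟨h₁, h₂, -⟩)
        · exact absurd h (by decide)
        · first
          | exact absurd h₁ (by decide)
          | exact absurd h₂ (by decide)

lemma castLE_lt_iff : ∀ c d : Fin 2,
    c < d ↔ Fin.castLE (by omega : 2 ≤ 3) c < Fin.castLE (by omega) d := by decide

lemma succ_lt_iff : ∀ c d : Fin 2, c < d ↔ Fin.succ c < Fin.succ d := by decide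

lemma castLE_range :
    Set.range (fun k : Fin 2 => Fin.castLE (by omega : 2 ≤ 3) k)
      = {(0 : Fin 3), (1 : Fin 3)} := by
  ext w
  simp only [Set.mem_range, Set.mem_insert_iff, Set.mem_singleton_iff]
  constructor
  · rintro ⟨c, rfl⟩
    fin_cases c
    · left; decide
    · right; decide
  · rintro (rfl | rfl)
    · exact ⟨0, by decide⟩
    · exact ⟨1, by decide⟩

lemma succ_range :
    Set.range (fun k : Fin 2 => Fin.succ k) = {(1 : Fin 3), (2 : Fin 3)} := by
  ext w
  simp only [Set.mem_range, Set.mem_insert_iff, Set.mem_singleton_iff]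
  constructor
  · rintro ⟨c, rfl⟩
    fin_cases c
    · left; decide
    · right; decide
  · rintro (rfl | rfl)
    · exact ⟨0, by decide⟩
    · exact ⟨1, by decide⟩

lemma tau01_copy {n : ℕ} (σ : OMPoset n) (a b : σ.carrier) :
    (mkTau n).IsCopy (mkD σ a b) {(0 : Fin 3), (1 : Fin 3)} := by
  refine ⟨fun k => Fin.castLE (by omega) k, ⟨?_, ?_, ?_⟩, ?_⟩
  · exact fun c d h => Fin.castLE_injective _ h
  · intro i c d
    constructor
    · rintro rfl; exact Or.inl rfl
    · rintro (h | ⟨-, h, -⟩)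
      · exact Fin.castLE_injective _ h
      · have h' : @Fin.val 2 d = 2 := congrArg Fin.val h
        have := d.isLt
        omega
  · exact fun c d => castLE_lt_iff c d
  · exact castLE_range

lemma tau12_copy {n : ℕ} (σ : OMPoset n) (a b : σ.carrier) :
    (mkTau n).IsCopy (mkD σ a b) {(1 : Fin 3), (2 : Fin 3)} := by
  refine ⟨fun k => Fin.succ k, ⟨?_, ?_, ?_⟩, ?_⟩
  · exact fun c d h => Fin.succ_injective _ h
  · intro i c d
    constructor
    · rintro rfl; exact Or.inl rfl
    · rintro (h | ⟨h, -, -⟩)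
      · exact Fin.succ_injective _ h
      · exact absurd h (Fin.succ_ne_zero c)
  · exact fun c d => succ_lt_iff c d
  · exact succ_range

theorem stmt_14 (n : ℕ) (t : Fin n → Fin n → Prop)
    (ht : IsPartialOrder (Fin n) t) :
    -- main claim: every two-element member `σ = ({a,b}, …, a < b)` sits as the
    -- substructure on `{x, z}` of some member `D` with `x < y < z`, where `y`
    -- is incomparable with `x` and `z` in every partial order of `D`
    (∀ (σ : OMPoset n), σ.Conforms t →
      ∀ a b : σ.carrier, σ.lt a b → (∀ c, c = a ∨ c = b) →
        ∃ D : OMPoset n, D.Conforms t ∧ ∃ x y z : D.carrier,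
          D.lt x y ∧ D.lt y z ∧
          (∀ i, (σ.rel i a b ↔ D.rel i x z) ∧ (σ.rel i b a ↔ D.rel i z x)) ∧
          (σ.lt a b ↔ D.lt x z) ∧ (σ.lt b a ↔ D.lt z x) ∧
          (∀ i, ¬ D.rel i x y ∧ ¬ D.rel i y x ∧ ¬ D.rel i y z ∧ ¬ D.rel i z y))
    ∧
    -- consequence: the weak triangle condition holds, witnessed by the
    -- two-element structure `τ` whose elements are incomparable in every
    -- partial order
    (∃ τ : OMPoset n, τ.Conforms t ∧ τ.TwoElem ∧
      (∀ i (u v : τ.carrier), τ.rel i u v → u = v) ∧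
      ∀ σ : OMPoset n, σ.Conforms t → σ.TwoElem →
        ∃ D : OMPoset n, D.Conforms t ∧ ∃ x y z : D.carrier,
          D.lt x y ∧ D.lt y z ∧
          σ.IsCopy D {x, z} ∧ τ.IsCopy D {x, y} ∧ τ.IsCopy D {y, z}) := by
  classical
  constructor
  · intro σ hc a b hab _
    obtain ⟨h1, h2, h3, h4, h5, h6, h7⟩ := mkD_spec t σ hc a b hab
    exact ⟨mkD σ a b, h1, _, _, _, h2, h3, h4, h5, h6, h7⟩
  · refine ⟨mkTau n, fun i j _ a b h => h,
      ⟨(0 : Fin 2), (1 : Fin 2), (by decide : (0 : Fin 2) ≠ 1),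
        (by decide : ∀ c : Fin 2, c = 0 ∨ c = 1)⟩,
      fun i u v h => h, ?_⟩
    intro σ hc htwo
    obtain ⟨u, v, huv, hall⟩ := htwo
    have key : ∀ a b : σ.carrier, σ.lt a b → (∀ c, c = a ∨ c = b) →
        ∃ D : OMPoset n, D.Conforms t ∧ ∃ x y z : D.carrier,
          D.lt x y ∧ D.lt y z ∧
          σ.IsCopy D {x, z} ∧ (mkTau n).IsCopy D {x, y} ∧ (mkTau n).IsCopy D {y, z} := by
      intro a b hab hall2
      obtain ⟨h1, h2, h3, h4, h5, h6, h7⟩ := mkD_spec t σ hc a b hab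
      have hba : b ≠ a := (lt_ne σ hab).symm
      refine ⟨mkD σ a b, h1, (0 : Fin 3), (1 : Fin 3), (2 : Fin 3), h2, h3, ?_,
        tau01_copy σ a b, tau12_copy σ a b⟩
      -- σ.IsCopy on {0, 2}
      refine ⟨fun c => (if c = a then (0 : Fin 3) else (2 : Fin 3) : Fin 3), ⟨?_, ?_, ?_⟩, ?_⟩
      · intro c d h
        beta_reduce at h
        rcases hall2 c with rfl | rfl <;> rcases hall2 d with rfl | rfl
        · rfl
        · rw [if_pos rfl, if_neg hba] at h; exact absurd h (by decide : ¬ ((0 : Fin 3) = 2))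
        · rw [if_neg hba, if_pos rfl] at h; exact absurd h (by decide : ¬ ((2 : Fin 3) = 0))
        · rfl
      · intro i c d
        beta_reduce
        rcases hall2 c with rfl | rfl <;> rcases hall2 d with rfl | rfl
        · rw [if_pos rfl]
          exact iff_of_true ((σ.po i).refl _) (Or.inl rfl)
        · rw [if_pos rfl, if_neg hba]
          exact (h4 i).1
        · rw [if_neg hba, if_pos rfl]
          exact (h4 i).2
        · rw [if_neg hba]
          exact iff_of_true ((σ.po i).refl _) (Or.inl rfl)
      · intro c d
        beta_reduce
        rcases hall2 c with rfl | rfl <;> rcases hall2 d with rfl | rfl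
        · rw [if_pos rfl]
          exact iff_of_false (σ.sto.irrefl _) (by decide : ¬ ((0 : Fin 3) < 0))
        · rw [if_pos rfl, if_neg hba]
          exact h5
        · rw [if_neg hba, if_pos rfl]
          exact h6
        · rw [if_neg hba]
          exact iff_of_false (σ.sto.irrefl _) (by decide : ¬ ((2 : Fin 3) < 2))
      · apply Set.ext; intro w
        change (∃ c, _ = w) ↔ w = (0 : Fin 3) ∨ w = (2 : Fin 3)
        constructor
        · rintro ⟨c, rfl⟩
          rcases hall2 c with rfl | rfl
          · left; exact if_pos rfl
          · right; exact if_neg hba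
        · rintro (rfl | rfl)
          · exact ⟨a, if_pos rfl⟩
          · exact ⟨b, if_neg hba⟩
    rcases (haveI := σ.sto; trichotomous_of σ.lt u v) with h | h | h
    · exact key u v h hall
    · exact absurd h huv
    · exact key v u h (fun c => (hall c).symm)
end
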